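/- For all positive integers a and b, every family of at least b!·a^b + 1 distinct finite sets, each of cardinality at most b, contains a sunflower with more than a members. -/

import Mathlib

open Finset

/-- **Sunflower lemma** (Erdős–Rado). For all positive integers `a` and `b`, every family of
at least `b! * a ^ b + 1` distinct finite sets, each of cardinality at most `b`, contains a
sunflower with more than `a` members, i.e. a subfamily `T` with `a < T.card` such that for some
set `t` (the centre), `u ∩ v = t` for all distinct `u, v ∈ T`. -/
theorem sunflower_lemma {α : Type*} [DecidableEq α] (a b : ℕ) (ha : 0 < a) (hb : 0 < b)
    (S : Finset (Finset α)) (hcard : Nat.factorial b * a ^ b + 1 ≤ S.card)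
    (hsize : ∀ u ∈ S, u.card ≤ b) :
    ∃ T ⊆ S, a < T.card ∧ ∃ t : Finset α, ∀ u ∈ T, ∀ v ∈ T, u ≠ v → u ∩ v = t := by
  clear hb
  induction b generalizing S with
  | zero =>
    -- all sets are empty, hence S has at most 1 element; still the trivial sunflower works
    exfalso
    have hsub : S ⊆ {∅} := by
      intro u hu
      have : u = ∅ := Finset.card_eq_zero.1 (Nat.le_zero.1 (hsize u hu))
      simp [this]
    have := Finset.card_le_card hsub
    simp only [Nat.factorial_zero, pow_zero, one_mul] at hcard
    simp at this
    omega
  | succ b ih =>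
    rcases Nat.eq_zero_or_pos b with hb0 | hbpos
    · -- base case b = 1: all sets have card ≤ 1, so any two distinct ones intersect in ∅
      subst hb0
      refine ⟨S, Subset.rfl, ?_, ∅, ?_⟩
      · simp [Nat.factorial] at hcard; omega
      · intro u hu v hv huv
        have hu1 := hsize u hu
        have hv1 := hsize v hv
        by_contra h
        obtain ⟨x, hx⟩ := Finset.nonempty_iff_ne_empty.2 h
        rw [Finset.mem_inter] at hx
        have hu' : u = {x} := Finset.eq_singleton_iff_unique_mem.2
          ⟨hx.1, fun y hy => Finset.card_le_one.1 hu1 y hy x hx.1⟩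
        have hv' : v = {x} := Finset.eq_singleton_iff_unique_mem.2
          ⟨hx.2, fun y hy => Finset.card_le_one.1 hv1 y hy x hx.2⟩
        exact huv (hu'.trans hv'.symm)
    · -- inductive step, b ≥ 1
      -- take a maximal pairwise-disjoint subfamily of nonempty sets
      set 𝒟 : Finset (Finset (Finset α)) :=
        S.powerset.filter
          (fun D => (∀ u ∈ D, u ≠ ∅) ∧ ∀ u ∈ D, ∀ v ∈ D, u ≠ v → u ∩ v = ∅) with h𝒟
      have h𝒟ne : 𝒟.Nonempty := ⟨∅, by simp [h𝒟]⟩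
      obtain ⟨D, hD𝒟, hDmax⟩ := 𝒟.exists_max_image Finset.card h𝒟ne
      rw [h𝒟, Finset.mem_filter, Finset.mem_powerset] at hD𝒟
      obtain ⟨hDS, hDne, hDdisj⟩ := hD𝒟
      have hDemp : ∅ ∉ D := fun h => hDne ∅ h rfl
      -- the candidate "trivial" sunflower
      by_cases hbig : a < D.card + (if ∅ ∈ S then 1 else 0)
      · -- D (plus possibly ∅) is itself a big sunflower with centre ∅
        by_cases hES : ∅ ∈ S
        · refine ⟨insert ∅ D, ?_, ?_, ∅, ?_⟩
          · exact Finset.insert_subset hES hDS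
          · rw [Finset.card_insert_of_notMem hDemp]; simpa [hES] using hbig
          · intro u hu v hv huv
            rcases Finset.mem_insert.1 hu with rfl | hu'
            · simp
            rcases Finset.mem_insert.1 hv with rfl | hv'
            · simp
            exact hDdisj u hu' v hv' huv
        · exact ⟨D, hDS, by simpa [hES] using hbig, ∅, hDdisj⟩
      · -- D is small; every nonempty set of S meets A := ⋃ D
        push_neg at hbig
        set A : Finset α := D.biUnion id with hA
        have hAcard : A.card ≤ D.card * (b + 1) := by
          calc A.card ≤ ∑ u ∈ D, u.card := Finset.card_biUnion_le
            _ ≤ ∑ _u ∈ D, (b + 1) := Finset.sum_le_sum fun u hu => hsize u (hDS hu)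
            _ = D.card * (b + 1) := by simp [Finset.sum_const, mul_comm]
        have hmeet : ∀ u ∈ S, u ≠ ∅ → (u ∩ A).Nonempty := by
          intro u huS hune
          by_contra hcon
          rw [Finset.not_nonempty_iff_eq_empty] at hcon
          have huD : u ∉ D := by
            intro huD
            have : u ⊆ A := fun y hy => Finset.mem_biUnion.2 ⟨u, huD, hy⟩
            have : u ∩ A = u := Finset.inter_eq_left.2 this
            exact hune (this ▸ hcon)
          have hins : insert u D ∈ 𝒟 := by
            rw [h𝒟, Finset.mem_filter, Finset.mem_powerset]
            refine ⟨Finset.insert_subset huS hDS, ?_, ?_⟩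
            · intro v hv
              rcases Finset.mem_insert.1 hv with rfl | hv'
              · exact hune
              · exact hDne v hv'
            · intro v hv w hw hvw
              have key : ∀ z ∈ D, u ∩ z = ∅ := by
                intro z hz
                have hzA : z ⊆ A := fun y hy => Finset.mem_biUnion.2 ⟨z, hz, hy⟩
                have := Finset.inter_subset_inter (Finset.Subset.refl u) hzA
                rw [hcon] at this
                exact Finset.subset_empty.1 this
              rcases Finset.mem_insert.1 hv with rfl | hv'
              · rcases Finset.mem_insert.1 hw with rfl | hw'
                · exact absurd rfl hvw
                · exact key w hw'
              · rcases Finset.mem_insert.1 hw with rfl | hw'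
                · rw [Finset.inter_comm]; exact key v hv'
                · exact hDdisj v hv' w hw' hvw
          have := hDmax _ hins
          rw [Finset.card_insert_of_notMem huD] at this
          omega
        -- pigeonhole: some x ∈ A lies in many sets of S
        set K : ℕ := Nat.factorial b * a ^ b with hK
        have hKpos : 0 < K := Nat.mul_pos (Nat.factorial_pos b) (pow_pos ha b)
        set F : Finset (Finset α) := S.filter (fun u => u ≠ ∅) with hF
        have hsub : F ⊆ A.biUnion (fun x => S.filter (fun u => x ∈ u)) := by
          intro u hu
          rw [hF, Finset.mem_filter] at hu
          obtain ⟨x, hx⟩ := hmeet u hu.1 hu.2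
          rw [Finset.mem_inter] at hx
          exact Finset.mem_biUnion.2 ⟨x, hx.2, Finset.mem_filter.2 ⟨hu.1, hx.1⟩⟩
        have hsumge : F.card ≤ ∑ x ∈ A, (S.filter (fun u => x ∈ u)).card :=
          le_trans (Finset.card_le_card hsub) Finset.card_biUnion_le
        have hfac : Nat.factorial (b + 1) * a ^ (b + 1) = (b + 1) * K * a := by
          rw [hK, Nat.factorial_succ, pow_succ]; ring
        have hlt : ∑ _x ∈ A, K < ∑ x ∈ A, (S.filter (fun u => x ∈ u)).card := by
          rw [Finset.sum_const, smul_eq_mul]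
          refine lt_of_lt_of_le ?_ hsumge
          by_cases hES : ∅ ∈ S
          · have hFcard : Nat.factorial (b + 1) * a ^ (b + 1) ≤ F.card := by
              have hFe : F = S.erase ∅ := by
                rw [hF]; ext u; simp [Finset.mem_erase, and_comm]
              rw [hFe, Finset.card_erase_of_mem hES]
              omega
            rw [hfac] at hFcard
            have hD1 : D.card + 1 ≤ a := by simpa [hES] using hbig
            have hQ2 : 2 ≤ (b + 1) * K := by
              calc 2 = 2 * 1 := rfl
                _ ≤ (b + 1) * K := Nat.mul_le_mul (by omega) hKpos
            have hP : A.card * K + (b + 1) * K ≤ (b + 1) * K * a := by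
              calc A.card * K + (b + 1) * K ≤ D.card * (b + 1) * K + (b + 1) * K :=
                    Nat.add_le_add_right (Nat.mul_le_mul_right K hAcard) _
                _ = (D.card + 1) * ((b + 1) * K) := by ring
                _ ≤ a * ((b + 1) * K) := Nat.mul_le_mul_right _ hD1
                _ = (b + 1) * K * a := by ring
            omega
          · have hFe : F = S := by
              rw [hF]; exact Finset.filter_eq_self.2 fun u hu h => hES (h ▸ hu)
            have hFcard : Nat.factorial (b + 1) * a ^ (b + 1) + 1 ≤ F.card := by
              rw [hFe]; exact hcard
            rw [hfac] at hFcard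
            have hD1 : D.card ≤ a := by simpa [hES] using hbig
            have hP : A.card * K ≤ (b + 1) * K * a := by
              calc A.card * K ≤ D.card * (b + 1) * K := Nat.mul_le_mul_right K hAcard
                _ ≤ a * (b + 1) * K := Nat.mul_le_mul_right _ (Nat.mul_le_mul_right _ hD1)
                _ = (b + 1) * K * a := by ring
            omega
        obtain ⟨x, hxA, hx⟩ := Finset.exists_lt_of_sum_lt hlt
        -- the family of sets containing x, with x removed
        set Sx : Finset (Finset α) := S.filter (fun u => x ∈ u) with hSx
        have hxmem : ∀ u ∈ Sx, x ∈ u ∧ u ∈ S := by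
          intro u hu; rw [hSx, Finset.mem_filter] at hu; exact ⟨hu.2, hu.1⟩
        set S'' : Finset (Finset α) := Sx.image (fun u => u.erase x) with hS''
        have hinj : Set.InjOn (fun u : Finset α => u.erase x) ↑Sx := by
          intro u hu v hv huv
          have hxu := (hxmem u (Finset.mem_coe.1 hu)).1
          have hxv := (hxmem v (Finset.mem_coe.1 hv)).1
          rw [← Finset.insert_erase hxu, ← Finset.insert_erase hxv]
          simp only at huv
          rw [huv]
        have hS''card : K + 1 ≤ S''.card := by
          rw [hS'', Finset.card_image_of_injOn hinj]; omega
        have hS''size : ∀ v ∈ S'', v.card ≤ b := by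
          intro v hv
          rw [hS'', Finset.mem_image] at hv
          obtain ⟨u, hu, rfl⟩ := hv
          rw [Finset.card_erase_of_mem (hxmem u hu).1]
          have := hsize u (hxmem u hu).2
          omega
        obtain ⟨T'', hT''sub, hT''card, t'', hT''⟩ := ih S'' hS''card hS''size
        -- reinsert x
        have hT''x : ∀ v ∈ T'', x ∉ v ∧ insert x v ∈ S := by
          intro v hv
          obtain ⟨u, hu, rfl⟩ := Finset.mem_image.1 (hS'' ▸ hT''sub hv)
          exact ⟨Finset.notMem_erase x u,
            by rw [Finset.insert_erase (hxmem u hu).1]; exact (hxmem u hu).2⟩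
        refine ⟨T''.image (fun v => insert x v), ?_, ?_, insert x t'', ?_⟩
        · intro u hu
          obtain ⟨v, hv, rfl⟩ := Finset.mem_image.1 hu
          exact (hT''x v hv).2
        · rw [Finset.card_image_of_injOn]
          · exact hT''card
          · intro u hu v hv huv
            have hxu := (hT''x u hu).1
            have hxv := (hT''x v hv).1
            rw [← Finset.erase_insert hxu, ← Finset.erase_insert hxv]
            simp only at huv
            rw [huv]
        · intro u hu v hv huv
          obtain ⟨u', hu', rfl⟩ := Finset.mem_image.1 hu
          obtain ⟨v', hv', rfl⟩ := Finset.mem_image.1 hv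
          have hne : u' ≠ v' := fun h => huv (by rw [h])
          have := hT'' u' hu' v' hv' hne
          have hxu := (hT''x u' hu').1
          have hxv := (hT''x v' hv').1
          ext y
          simp only [Finset.mem_inter, Finset.mem_insert]
          constructor
          · rintro ⟨hy1 | hy1, hy2 | hy2⟩
            · exact Or.inl hy1
            · exact Or.inl hy1
            · exact Or.inl hy2
            · right; rw [← this]; exact Finset.mem_inter.2 ⟨hy1, hy2⟩
          · rintro (rfl | hy)
            · exact ⟨Or.inl rfl, Or.inl rfl⟩
            · rw [← this] at hy
              rcases Finset.mem_inter.1 hy with ⟨h1, h2⟩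
              exact ⟨Or.inr h1, Or.inr h2⟩
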